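/- Let G be a diregular (2,k,+2)-digraph with k ≥ 2 and let u, v be distinct vertices with N⁺(u) = N⁺(v) = {u₁, u₂}. Then v ∈ O(u) and u ∈ O(v); moreover u₁ ∈ O(u₂) and u₂ ∈ O(u₁), and there exists a vertex x with O(u) = {v, x} and O(v) = {u, x}. -/

import Mathlib

open scoped Classical

/-- There is a directed walk of length `n` from `u` to `v` in the digraph with
arc relation `A` (the walk is recorded as its list of `n+1` vertices). -/
def HasWalkLen {V : Type*} (A : V → V → Prop) (n : ℕ) (u v : V) : Prop :=
  ∃ l : List V, l.head? = some u ∧ l.getLast? = some v ∧ l.Chain' A ∧ l.length = n + 1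

/-- The distance from `u` to `v` is at most `n`. -/
def DistLe {V : Type*} (A : V → V → Prop) (n : ℕ) (u v : V) : Prop :=
  ∃ m ≤ n, HasWalkLen A m u v

/-- The distance from `u` to `v` is exactly `n`. -/
def DistEq {V : Type*} (A : V → V → Prop) (n : ℕ) (u v : V) : Prop :=
  HasWalkLen A n u v ∧ ∀ m < n, ¬ HasWalkLen A m u v

/-- A digraph is `k`-geodetic: between any ordered pair of vertices there is at
most one directed path of length at most `k`. -/
def Geodetic {V : Type*} (A : V → V → Prop) (k : ℕ) : Prop :=
  ∀ u v : V, ∀ l₁ l₂ : List V,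
    (l₁.head? = some u ∧ l₁.getLast? = some v ∧ l₁.Chain' A ∧ l₁.length ≤ k + 1) →
    (l₂.head? = some u ∧ l₂.getLast? = some v ∧ l₂.Chain' A ∧ l₂.length ≤ k + 1) →
    l₁ = l₂

/-- Out-neighbourhood. -/
def Nplus {V : Type*} (A : V → V → Prop) (u : V) : Set V := {v | A u v}

/-- Out-degree. -/
noncomputable def outDeg {V : Type*} (A : V → V → Prop) (u : V) : ℕ := {v | A u v}.ncard

/-- In-degree. -/
noncomputable def inDeg {V : Type*} (A : V → V → Prop) (u : V) : ℕ := {v | A v u}.ncard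

/-- `T_k(u)`: the set of vertices at distance at most `k` from `u`. -/
def Tset {V : Type*} (A : V → V → Prop) (k : ℕ) (u : V) : Set V := {v | DistLe A k u v}

/-- `O(u)`: the outliers of `u`, i.e. vertices at distance at least `k+1` from `u`. -/
def Outliers {V : Type*} (A : V → V → Prop) (k : ℕ) (u : V) : Set V := {v | ¬ DistLe A k u v}

section Aux
variable {V : Type*} {A : V → V → Prop} {k : ℕ}

lemma hwl_zero {u v : V} : HasWalkLen A 0 u v ↔ u = v := by
  constructor
  · rintro ⟨l, h1, h2, h3, h4⟩
    obtain ⟨a, rfl⟩ := List.length_eq_one_iff.mp h4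
    simp only [List.head?_cons, Option.some.injEq] at h1
    simp only [List.getLast?_singleton, Option.some.injEq] at h2
    rw [← h1, ← h2]
  · rintro rfl
    exact ⟨[u], rfl, rfl, List.isChain_singleton u, rfl⟩

lemma hwl_succ {n : ℕ} {u v : V} :
    HasWalkLen A (n + 1) u v ↔ ∃ w, A u w ∧ HasWalkLen A n w v := by
  constructor
  · rintro ⟨l, h1, h2, h3, h4⟩
    rcases l with _ | ⟨x, l'⟩
    · simp at h1
    rcases l' with _ | ⟨w, t⟩
    · simp at h4
    simp only [List.head?_cons, Option.some.injEq] at h1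
    subst h1
    rw [List.getLast?_cons_cons] at h2
    replace h3 := List.isChain_cons_cons.mp h3
    refine ⟨w, h3.1, w :: t, rfl, h2, h3.2, ?_⟩
    simpa using h4
  · rintro ⟨w, haw, l, h1, h2, h3, h4⟩
    rcases l with _ | ⟨a, t⟩
    · simp at h1
    simp only [List.head?_cons, Option.some.injEq] at h1
    refine ⟨u :: a :: t, rfl, ?_, List.isChain_cons_cons.mpr ⟨by rw [h1]; exact haw, h3⟩, ?_⟩
    · rw [List.getLast?_cons_cons]; exact h2
    · simp only [List.length_cons] at h4 ⊢; omega

lemma hwl_cons {n : ℕ} {u w v : V} (h : A u w) (h' : HasWalkLen A n w v) :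
    HasWalkLen A (n + 1) u v := hwl_succ.mpr ⟨w, h, h'⟩

lemma hwl_snoc {n : ℕ} {u v : V} :
    HasWalkLen A (n + 1) u v ↔ ∃ w, HasWalkLen A n u w ∧ A w v := by
  induction n generalizing u v with
  | zero =>
    rw [hwl_succ]
    constructor
    · rintro ⟨w, h, hw⟩
      obtain rfl := hwl_zero.mp hw
      exact ⟨u, hwl_zero.mpr rfl, h⟩
    · rintro ⟨w, hw, h⟩
      obtain rfl := hwl_zero.mp hw
      exact ⟨v, h, hwl_zero.mpr rfl⟩
  | succ n ih =>
    rw [hwl_succ]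
    constructor
    · rintro ⟨w, h, hw⟩
      obtain ⟨y, hy, hyv⟩ := ih.mp hw
      exact ⟨y, hwl_cons h hy, hyv⟩
    · rintro ⟨y, hy, hyv⟩
      obtain ⟨w, h, hw⟩ := hwl_succ.mp hy
      exact ⟨w, h, ih.mpr ⟨y, hw, hyv⟩⟩

lemma geo_len_eq (hgeo : Geodetic A k) {u z : V} {m m' : ℕ}
    (h : HasWalkLen A m u z) (h' : HasWalkLen A m' u z)
    (hm : m ≤ k) (hm' : m' ≤ k) : m = m' := by
  obtain ⟨l₁, p1, p2, p3, p4⟩ := h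
  obtain ⟨l₂, q1, q2, q3, q4⟩ := h'
  have := hgeo u z l₁ l₂ ⟨p1, p2, p3, by omega⟩ ⟨q1, q2, q3, by omega⟩
  subst this
  omega

lemma noCycle (hgeo : Geodetic A k) {w : V} {m : ℕ} (h1 : 1 ≤ m) (h2 : m ≤ k) :
    ¬ HasWalkLen A m w w := fun h => by
  have := geo_len_eq hgeo h (hwl_zero.mpr rfl) h2 (Nat.zero_le k)
  omega

lemma geo_branch (hgeo : Geodetic A k) {u a b z : V} {m m' : ℕ}
    (hab : a ≠ b) (ha : A u a) (hb : A u b)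
    (hwa : HasWalkLen A m a z) (hwb : HasWalkLen A m' b z)
    (hm : m + 1 ≤ k) (hm' : m' + 1 ≤ k) : False := by
  obtain ⟨l₁, p1, p2, p3, p4⟩ := hwa
  obtain ⟨l₂, q1, q2, q3, q4⟩ := hwb
  rcases l₁ with _ | ⟨a', t₁⟩
  · simp at p1
  rcases l₂ with _ | ⟨b', t₂⟩
  · simp at q1
  simp only [List.head?_cons, Option.some.injEq] at p1 q1
  have := hgeo u z (u :: a' :: t₁) (u :: b' :: t₂)
    ⟨rfl, by rw [List.getLast?_cons_cons]; exact p2,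
      List.isChain_cons_cons.mpr ⟨by rw [p1]; exact ha, p3⟩,
      by simp only [List.length_cons] at p4 ⊢; omega⟩
    ⟨rfl, by rw [List.getLast?_cons_cons]; exact q2,
      List.isChain_cons_cons.mpr ⟨by rw [q1]; exact hb, q3⟩,
      by simp only [List.length_cons] at q4 ⊢; omega⟩
  have hab' : a' = b' := by injection this with _ h; injection h with h _
  exact hab (by rw [← p1, ← q1, hab'])

end Aux

section Aux2
variable {V : Type*} {A : V → V → Prop} {k : ℕ}

lemma Tset_zero (w : V) : Tset A 0 w = {w} := by
  ext z
  simp only [Tset, Set.mem_setOf_eq, DistLe, Set.mem_singleton_iff]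
  constructor
  · rintro ⟨m, hm, hw⟩
    obtain rfl : m = 0 := by omega
    exact (hwl_zero.mp hw).symm
  · rintro rfl
    exact ⟨0, le_refl 0, hwl_zero.mpr rfl⟩

lemma Tset_succ {j : ℕ} {w a b : V} (hab : Nplus A w = {a, b}) :
    Tset A (j + 1) w = {w} ∪ Tset A j a ∪ Tset A j b := by
  have haw : A w a := by
    have : a ∈ Nplus A w := by rw [hab]; exact Set.mem_insert a {b}
    exact this
  have hbw : A w b := by
    have : b ∈ Nplus A w := by rw [hab]; exact Set.mem_insert_of_mem a rfl
    exact this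
  ext z
  simp only [Tset, Set.mem_setOf_eq, Set.mem_union, Set.mem_singleton_iff]
  constructor
  · rintro ⟨m, hm, hw⟩
    rcases m with _ | m
    · exact Or.inl (Or.inl (hwl_zero.mp hw).symm)
    obtain ⟨c, hc, hw'⟩ := hwl_succ.mp hw
    have : c ∈ ({a, b} : Set V) := by rw [← hab]; exact hc
    rcases this with rfl | rfl
    · exact Or.inl (Or.inr ⟨m, by omega, hw'⟩)
    · exact Or.inr ⟨m, by omega, hw'⟩
  · rintro ((rfl | ⟨m, hm, hw⟩) | ⟨m, hm, hw⟩)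
    · exact ⟨0, by omega, hwl_zero.mpr rfl⟩
    · exact ⟨m + 1, by omega, hwl_cons haw hw⟩
    · exact ⟨m + 1, by omega, hwl_cons hbw hw⟩

lemma not_mem_Tset_nbr (hgeo : Geodetic A k) {j : ℕ} {w a : V}
    (ha : A w a) (hj : j + 1 ≤ k) : w ∉ Tset A j a := by
  rintro ⟨m, hm, hw⟩
  exact noCycle hgeo (by omega) (by omega) (hwl_cons ha hw)

lemma Tset_disjoint (hgeo : Geodetic A k) {j : ℕ} {w a b : V}
    (ha : A w a) (hb : A w b) (hab : a ≠ b) (hj : j + 1 ≤ k) :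
    Disjoint (Tset A j a) (Tset A j b) := by
  rw [Set.disjoint_left]
  rintro z ⟨m, hm, hwa⟩ ⟨m', hm', hwb⟩
  exact geo_branch hgeo hab ha hb hwa hwb (by omega) (by omega)

lemma Tset_ncard [Fintype V] (hgeo : Geodetic A k)
    (hdeg : ∀ w, outDeg A w = 2 ∧ inDeg A w = 2) :
    ∀ j, j ≤ k → ∀ w : V, (Tset A j w).ncard = 2 ^ (j + 1) - 1 := by
  intro j
  induction j with
  | zero =>
    intro _ w
    rw [Tset_zero, Set.ncard_singleton]; norm_num
  | succ j ih =>
    intro hjk w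
    obtain ⟨a, b, hab, hN⟩ := Set.ncard_eq_two.mp (hdeg w).1
    have hN' : Nplus A w = {a, b} := hN
    have haw : A w a := by
      have : a ∈ Nplus A w := by rw [hN']; exact Set.mem_insert a {b}
      exact this
    have hbw : A w b := by
      have : b ∈ Nplus A w := by rw [hN']; exact Set.mem_insert_of_mem a rfl
      exact this
    have hdab : Disjoint (Tset A j a) (Tset A j b) := Tset_disjoint hgeo haw hbw hab hjk
    have hwa : w ∉ Tset A j a := not_mem_Tset_nbr hgeo haw hjk
    have hwb : w ∉ Tset A j b := not_mem_Tset_nbr hgeo hbw hjk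
    rw [Tset_succ hN']
    have d1 : Disjoint ({w} : Set V) (Tset A j a) := Set.disjoint_singleton_left.mpr hwa
    have d2 : Disjoint (({w} : Set V) ∪ Tset A j a) (Tset A j b) :=
      Set.disjoint_union_left.mpr ⟨Set.disjoint_singleton_left.mpr hwb, hdab⟩
    rw [Set.ncard_union_eq d2 (Set.toFinite _) (Set.toFinite _),
      Set.ncard_union_eq d1 (Set.toFinite _) (Set.toFinite _),
      Set.ncard_singleton, ih (by omega) a, ih (by omega) b]
    have h1 : 1 ≤ 2 ^ (j + 1) := Nat.one_le_two_pow
    have h2 : 2 ^ (j + 1 + 1) = 2 ^ (j + 1) * 2 := pow_succ 2 (j + 1)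
    omega

end Aux2

/-- In a diregular `(2,k,+2)`-digraph with `k ≥ 2`, if distinct vertices
`u, v` satisfy `N⁺(u) = N⁺(v) = {u₁, u₂}`, then `v ∈ O(u)`, `u ∈ O(v)`,
`u₁ ∈ O(u₂)`, `u₂ ∈ O(u₁)`, and there is a vertex `x` with
`O(u) = {v, x}` and `O(v) = {u, x}`. -/
theorem stmt_6 {V : Type*} [Fintype V] (A : V → V → Prop) (k : ℕ) (hk : 2 ≤ k)
    (hgeo : Geodetic A k)
    (hdeg : ∀ w, outDeg A w = 2 ∧ inDeg A w = 2)
    (hcard : Fintype.card V = 2 ^ (k + 1) + 1)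
    (u v u₁ u₂ : V) (huv : u ≠ v) (h12 : u₁ ≠ u₂)
    (hu : Nplus A u = {u₁, u₂}) (hv : Nplus A v = {u₁, u₂}) :
    v ∈ Outliers A k u ∧ u ∈ Outliers A k v ∧
    u₁ ∈ Outliers A k u₂ ∧ u₂ ∈ Outliers A k u₁ ∧
    ∃ x : V, Outliers A k u = {v, x} ∧ Outliers A k v = {u, x} := by
  obtain ⟨j, rfl⟩ : ∃ j, k = j + 1 := ⟨k - 1, by omega⟩
  set k := j + 1 with hkdef
  have hj : 1 ≤ j := by omega
  have hAu1 : A u u₁ := by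
    have : u₁ ∈ Nplus A u := by rw [hu]; exact Set.mem_insert u₁ {u₂}
    exact this
  have hAu2 : A u u₂ := by
    have : u₂ ∈ Nplus A u := by rw [hu]; exact Set.mem_insert_of_mem u₁ rfl
    exact this
  have hAv1 : A v u₁ := by
    have : u₁ ∈ Nplus A v := by rw [hv]; exact Set.mem_insert u₁ {u₂}
    exact this
  have hAv2 : A v u₂ := by
    have : u₂ ∈ Nplus A v := by rw [hv]; exact Set.mem_insert_of_mem u₁ rfl
    exact this
  -- Step 1: no walk of length ≤ k between the twin vertices (in either direction)
  have key_uv : ∀ p q : V, p ≠ q → Nplus A p = ({u₁, u₂} : Set V) →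
      Nplus A q = ({u₁, u₂} : Set V) → ¬ DistLe A k p q := by
    rintro p q hpq hp hq ⟨m, hm, hw⟩
    rcases m with _ | m
    · exact hpq (hwl_zero.mp hw)
    obtain ⟨c, hc, hw'⟩ := hwl_succ.mp hw
    have hc' : c ∈ ({u₁, u₂} : Set V) := by rw [← hp]; exact hc
    have hqc : A q c := by
      have : c ∈ Nplus A q := by rw [hq]; exact hc'
      exact this
    have : HasWalkLen A (m + 1) c c := hwl_snoc.mpr ⟨q, hw', hqc⟩
    exact noCycle hgeo (by omega) (by omega) this
  have hvOu : ¬ DistLe A k u v := key_uv u v huv hu hv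
  have huOv : ¬ DistLe A k v u := key_uv v u (Ne.symm huv) hv hu
  -- Step 2: no walk of length ≤ k between u₁ and u₂ (in either direction)
  have key_o : ∀ a b : V, ({a, b} : Set V) = ({u₁, u₂} : Set V) → a ≠ b →
      ¬ DistLe A k a b := by
    rintro a b hset hab ⟨m, hm, hw⟩
    have hainN : a ∈ ({u₁, u₂} : Set V) := by
      rw [← hset]; exact Set.mem_insert a {b}
    have hbinN : b ∈ ({u₁, u₂} : Set V) := by
      rw [← hset]; exact Set.mem_insert_of_mem a rfl
    have hAua : A u a := by
      have : a ∈ Nplus A u := by rw [hu]; exact hainN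
      exact this
    have hAub : A u b := by
      have : b ∈ Nplus A u := by rw [hu]; exact hbinN
      exact this
    have hAvb : A v b := by
      have : b ∈ Nplus A v := by rw [hv]; exact hbinN
      exact this
    rcases m with _ | m
    · exact hab (hwl_zero.mp hw)
    by_cases hmk : m + 1 < k
    · -- short case: two short walks from u to b
      have h1 : HasWalkLen A (m + 2) u b := hwl_cons hAua hw
      have h2 : HasWalkLen A 1 u b := hwl_succ.mpr ⟨b, hAub, hwl_zero.mpr rfl⟩
      have := geo_len_eq hgeo h1 h2 (by omega) (by omega)
      omega
    · -- long case: m + 1 = k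
      obtain ⟨y, hy, hyb⟩ := hwl_snoc.mp hw
      -- in-neighbourhood of b is exactly {u, v}
      have hsub : ({u, v} : Set V) ⊆ {z | A z b} := by
        rintro z (rfl | rfl)
        · exact hAub
        · exact hAvb
      have hin : ({u, v} : Set V) = {z | A z b} :=
        Set.eq_of_subset_of_ncard_le hsub
          (by rw [Set.ncard_pair huv]; exact le_of_eq (hdeg b).2)
      have hy_mem : y ∈ ({u, v} : Set V) := by rw [hin]; exact hyb
      rcases hy_mem with rfl | rfl
      · -- y = u : closed walk at u of length k
        exact noCycle hgeo (by omega) (by omega : m + 1 ≤ k) (hwl_cons hAua hy)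
      · -- y = v : walk from u to v of length k
        exact hvOu ⟨m + 1, by omega, hwl_cons hAua hy⟩
  have h12O : ¬ DistLe A k u₂ u₁ := key_o u₂ u₁ (Set.pair_comm u₂ u₁) (Ne.symm h12)
  have h21O : ¬ DistLe A k u₁ u₂ := key_o u₁ u₂ rfl h12
  -- Step 3: structure of the outlier sets
  have hTu : Tset A k u = {u} ∪ Tset A j u₁ ∪ Tset A j u₂ := Tset_succ hu
  have hTv : Tset A k v = {v} ∪ Tset A j u₁ ∪ Tset A j u₂ := Tset_succ hv
  set S : Set V := Tset A j u₁ ∪ Tset A j u₂ with hSdef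
  have hdisj : Disjoint (Tset A j u₁) (Tset A j u₂) :=
    Tset_disjoint hgeo hAu1 hAu2 h12 (le_refl k)
  have hn1 : (Tset A j u₁).ncard = 2 ^ (j + 1) - 1 :=
    Tset_ncard hgeo hdeg j (by omega) u₁
  have hn2 : (Tset A j u₂).ncard = 2 ^ (j + 1) - 1 :=
    Tset_ncard hgeo hdeg j (by omega) u₂
  have hSn : S.ncard = 2 ^ (j + 1) * 2 - 2 := by
    rw [hSdef, Set.ncard_union_eq hdisj (Set.toFinite _) (Set.toFinite _), hn1, hn2]
    have : 1 ≤ 2 ^ (j + 1) := Nat.one_le_two_pow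
    omega
  have hcompl : S.ncard + Sᶜ.ncard = 2 ^ (j + 1) * 2 + 1 := by
    rw [Set.ncard_add_ncard_compl]
    rw [Nat.card_eq_fintype_card, hcard]
    rw [pow_succ]
  have hScn : Sᶜ.ncard = 3 := by
    have : 1 ≤ 2 ^ (j + 1) := Nat.one_le_two_pow
    omega
  have huS : u ∉ S := by
    rintro (h | h)
    · exact not_mem_Tset_nbr hgeo hAu1 (le_refl k) h
    · exact not_mem_Tset_nbr hgeo hAu2 (le_refl k) h
  have hvS : v ∉ S := by
    rintro (h | h)
    · exact not_mem_Tset_nbr hgeo hAv1 (le_refl k) h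
    · exact not_mem_Tset_nbr hgeo hAv2 (le_refl k) h
  have hpair_sub : ({u, v} : Set V) ⊆ Sᶜ := by
    rintro z (rfl | rfl)
    · exact huS
    · exact hvS
  have hdiff : (Sᶜ \ {u, v}).ncard = 1 := by
    rw [Set.ncard_diff hpair_sub (Set.toFinite _), hScn, Set.ncard_pair huv]
  obtain ⟨x, hx⟩ := Set.ncard_eq_one.mp hdiff
  have hxS : x ∈ Sᶜ \ ({u, v} : Set V) := by rw [hx]; rfl
  have hxu : x ≠ u := fun h => hxS.2 (Or.inl h)
  have hxv : x ≠ v := fun h => hxS.2 (Or.inr h)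
  have hSc : Sᶜ = {u, v, x} := by
    rw [← Set.union_diff_cancel hpair_sub, hx]
    ext z
    simp only [Set.mem_union, Set.mem_insert_iff, Set.mem_singleton_iff]
    tauto
  -- Outliers are complements of Tsets
  have hOu : Outliers A k u = (Tset A k u)ᶜ := rfl
  have hOv : Outliers A k v = (Tset A k v)ᶜ := rfl
  have hmemS : ∀ z : V, z ∈ Sᶜ ↔ (z = u ∨ z = v ∨ z = x) := by
    intro z; rw [hSc]; simp only [Set.mem_insert_iff, Set.mem_singleton_iff]
  refine ⟨hvOu, huOv, h12O, h21O, x, ?_, ?_⟩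
  · rw [hOu, hTu]
    ext z
    simp only [Set.mem_compl_iff, Set.mem_union, Set.mem_singleton_iff,
      Set.mem_insert_iff, not_or]
    constructor
    · rintro ⟨⟨hzu, hz1⟩, hz2⟩
      have : z ∈ Sᶜ := fun h => by rcases h with h | h; exact hz1 h; exact hz2 h
      rcases (hmemS z).mp this with rfl | rfl | rfl
      · exact absurd rfl hzu
      · exact Or.inl rfl
      · exact Or.inr rfl
    · rintro (rfl | rfl)
      · refine ⟨⟨Ne.symm huv, ?_⟩, ?_⟩
        · intro h; exact hvS (Or.inl h)
        · intro h; exact hvS (Or.inr h)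
      · refine ⟨⟨hxu, ?_⟩, ?_⟩
        · intro h; exact hxS.1 (Or.inl h)
        · intro h; exact hxS.1 (Or.inr h)
  · rw [hOv, hTv]
    ext z
    simp only [Set.mem_compl_iff, Set.mem_union, Set.mem_singleton_iff,
      Set.mem_insert_iff, not_or]
    constructor
    · rintro ⟨⟨hzv, hz1⟩, hz2⟩
      have : z ∈ Sᶜ := fun h => by rcases h with h | h; exact hz1 h; exact hz2 h
      rcases (hmemS z).mp this with rfl | rfl | rfl
      · exact Or.inl rfl
      · exact absurd rfl hzv
      · exact Or.inr rfl
    · rintro (rfl | rfl)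
      · refine ⟨⟨huv, ?_⟩, ?_⟩
        · intro h; exact huS (Or.inl h)
        · intro h; exact huS (Or.inr h)
      · refine ⟨⟨hxv, ?_⟩, ?_⟩
        · intro h; exact hxS.1 (Or.inl h)
        · intro h; exact hxS.1 (Or.inr h)
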